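/- Let Σ be a finite alphabet with |Σ| ≥ 2 and let α = x x be the pattern consisting of two occurrences of the same variable. Then the semigroup closure (L¹_Σ(α))⁺ = {w₁ … w_k | k ≥ 1, each w_i ∈ L¹_Σ(α)} is not a member of 𝓛¹_Σ, i.e., (L¹_Σ(α))⁺ ≠ L¹_Σ(γ) for every pattern γ. -/

import Mathlib

/-- The nonerasing terminal-free (one-dimensional) pattern language of the
pattern `α` (a nonempty string over the variables `ℕ`) over the alphabet `σ`:
all words obtained by substituting a nonempty word for each variable. -/
def patLang (σ : Type) (α : List ℕ) : Set (List σ) :=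
  {w | ∃ s : ℕ → List σ, (∀ x, s x ≠ []) ∧ w = α.flatMap s}

lemma mem_sq {σ : Type} {w : List σ} :
    w ∈ patLang σ [0, 0] ↔ ∃ t : List σ, t ≠ [] ∧ w = t ++ t := by
  constructor
  · rintro ⟨s, hs, rfl⟩
    exact ⟨s 0, hs 0, by simp⟩
  · rintro ⟨t, ht, rfl⟩
    exact ⟨fun _ => t, fun _ => ht, by simp⟩

lemma len_le {σ : Type} (s : ℕ → List σ) (hs : ∀ x, s x ≠ []) :
    ∀ γ : List ℕ, γ.length ≤ (γ.flatMap s).length := by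
  intro γ
  induction γ with
  | nil => simp
  | cons x γ ih =>
    simp only [List.flatMap_cons, List.length_append, List.length_cons]
    have := List.length_pos_iff.mpr (hs x)
    omega

lemma two_not_mem {σ : Type} {a b : σ} (hab : a ≠ b) (l : List (List σ))
    (hsq : ∀ u ∈ l, u ∈ patLang σ [0, 0]) : l.flatten ≠ [a, b] := by
  intro h
  cases l with
  | nil => simp at h
  | cons u l' =>
    obtain ⟨t, ht, hu⟩ := mem_sq.mp (hsq u (List.mem_cons_self (a := u) (l := l')))
    subst hu
    have hlen : t.length = 1 := by
      have h2 := congrArg List.length h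
      simp at h2
      have := List.length_pos_iff.mpr ht
      omega
    obtain ⟨c, rfl⟩ : ∃ c, t = [c] := by
      cases t with
      | nil => simp at hlen
      | cons c t' =>
        simp at hlen
        exact ⟨c, by simp [hlen]⟩
    simp at h
    exact hab (h.1 ▸ h.2.1.symm ▸ rfl)

/-- over a non-unary alphabet, the semigroup closure of the
pattern language of `x x` is not a pattern language. -/
theorem stmt17 {σ : Type} [Fintype σ] (hcard : 2 ≤ Fintype.card σ) :
    ∀ γ : List ℕ, γ ≠ [] →
      {w : List σ | ∃ l : List (List σ), l ≠ [] ∧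
          (∀ u ∈ l, u ∈ patLang σ [0, 0]) ∧ w = l.flatten} ≠
        patLang σ γ := by
  obtain ⟨a, b, hab⟩ := Fintype.one_lt_card_iff.mp hcard
  intro γ hγ hL
  -- [a,a] ∈ L
  have haa : [a, a] ∈ {w : List σ | ∃ l : List (List σ), l ≠ [] ∧
      (∀ u ∈ l, u ∈ patLang σ [0, 0]) ∧ w = l.flatten} := by
    refine ⟨[[a, a]], by simp, ?_, by simp⟩
    intro u hu
    simp at hu
    subst hu
    exact mem_sq.mpr ⟨[a], by simp, rfl⟩
  rw [hL] at haa
  obtain ⟨s, hs, heq⟩ := haa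
  have hlen2 : γ.length ≤ 2 := by
    have := len_le s hs γ
    have h2 : (γ.flatMap s).length = 2 := by rw [← heq]; rfl
    omega
  have hab' : [a, b] ∉ {w : List σ | ∃ l : List (List σ), l ≠ [] ∧
      (∀ u ∈ l, u ∈ patLang σ [0, 0]) ∧ w = l.flatten} := by
    rintro ⟨l, hl, hsq, habeq⟩
    exact two_not_mem hab l hsq habeq.symm
  match γ, hγ with
  | [v], _ =>
    apply hab'
    rw [hL]
    exact ⟨fun _ => [a, b], fun _ => by simp, by simp⟩
  | [v, u], _ =>
    by_cases hvu : v = u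
    · subst hvu
      -- [a,a,b,b] ∈ L
      have h4 : [a, a, b, b] ∈ {w : List σ | ∃ l : List (List σ), l ≠ [] ∧
          (∀ u ∈ l, u ∈ patLang σ [0, 0]) ∧ w = l.flatten} := by
        refine ⟨[[a, a], [b, b]], by simp, ?_, by simp⟩
        intro u hu
        simp at hu
        rcases hu with rfl | rfl
        · exact mem_sq.mpr ⟨[a], by simp, rfl⟩
        · exact mem_sq.mpr ⟨[b], by simp, rfl⟩
      rw [hL] at h4
      obtain ⟨s', hs', heq'⟩ := h4
      simp only [List.flatMap_cons, List.flatMap_nil, List.append_nil] at heq'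
      set t := s' v with ht
      have htl : t.length = 2 := by
        have := congrArg List.length heq'
        simp at this
        omega
      have h1 : t = [a, a] := by
        have h := List.take_left (l₁ := t) (l₂ := t)
        rw [htl, ← heq'] at h
        simpa using h.symm
      have h2 : t = [b, b] := by
        have h := List.drop_left (l₁ := t) (l₂ := t)
        rw [htl, ← heq'] at h
        simpa using h.symm
      rw [h1] at h2
      simp at h2
      exact hab h2
    · apply hab'
      rw [hL]
      refine ⟨fun x => if x = v then [a] else [b], ?_, ?_⟩
      · intro x; by_cases hx : x = v <;> simp [hx]
      · simp [hvu, Ne.symm hvu]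
  | v :: u :: w :: rest, _ => simp at hlen2
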